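/- Define ‖M - N‖_ω := sup over states ξ on R⊗A extending ω^A of ‖(id_R⊗M)(ξ) - (id_R⊗N)(ξ)‖₁ for CPTP maps M, N : A → B. Then for CPTP maps M, N : A → B and K, L : A' → B' and states ω on A, ρ on A', we have ‖M⊗K - N⊗L‖_{ω⊗ρ} ≤ ‖M - N‖_ω + ‖K - L‖_ρ. -/

import Mathlib

open scoped Matrix Kronecker ComplexOrder

noncomputable section

/-- The old `Matrix.PosSemidef.sqrt` (removed from Mathlib), spelled out verbatim. -/
noncomputable def Matrix.PosSemidef.sqrt {n : Type*} [Fintype n] [DecidableEq n] {A : Matrix n n ℂ}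
    (hA : A.PosSemidef) : Matrix n n ℂ :=
  hA.1.eigenvectorUnitary.1 * Matrix.diagonal ((↑) ∘ (√·) ∘ hA.1.eigenvalues) *
  (star hA.1.eigenvectorUnitary : Matrix n n ℂ)

open scoped MatrixOrder in
theorem Matrix.PosSemidef.sqrt_eq_CFC {n : Type*} [Fintype n] [DecidableEq n]
    {A : Matrix n n ℂ} (hA : A.PosSemidef) : hA.sqrt = CFC.sqrt A := by
  rw [CFC.sqrt_eq_real_sqrt A hA.nonneg, cfcₙ_eq_cfc, hA.1.cfc_eq]
  simp only [Matrix.IsHermitian.cfc, Unitary.conjStarAlgAut_apply, Matrix.PosSemidef.sqrt]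
  rfl

open scoped MatrixOrder in
theorem Matrix.PosSemidef.posSemidef_sqrt {n : Type*} [Fintype n] [DecidableEq n]
    {A : Matrix n n ℂ} (hA : A.PosSemidef) : hA.sqrt.PosSemidef := by
  rw [hA.sqrt_eq_CFC]
  exact Matrix.nonneg_iff_posSemidef.mp (CFC.sqrt_nonneg A)

open scoped MatrixOrder in
theorem Matrix.PosSemidef.sqrt_mul_self {n : Type*} [Fintype n] [DecidableEq n]
    {A : Matrix n n ℂ} (hA : A.PosSemidef) : hA.sqrt * hA.sqrt = A := by
  rw [hA.sqrt_eq_CFC]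
  exact CFC.sqrt_mul_sqrt_self A hA.nonneg

open scoped MatrixOrder in
theorem Matrix.PosSemidef.eq_sqrt_of_sq_eq {n : Type*} [Fintype n] [DecidableEq n]
    {A B : Matrix n n ℂ} (hA : A.PosSemidef) (hB : B.PosSemidef) (hAB : A ^ 2 = B) :
    A = hB.sqrt := by
  rw [hB.sqrt_eq_CFC]
  exact (CFC.sqrt_unique (by rw [← sq]; exact hAB) hA.nonneg).symm

noncomputable def traceNorm {n : Type*} [Fintype n] [DecidableEq n] (A : Matrix n n ℂ) : ℝ :=
  ((Matrix.posSemidef_conjTranspose_mul_self A).sqrt.trace).re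

noncomputable def vnEntropy {n : Type*} [Fintype n] [DecidableEq n] (ρ : Matrix n n ℂ) : ℝ :=
  if h : ρ.IsHermitian then -∑ i, (h.eigenvalues i * Real.log (h.eigenvalues i)) else 0

def ptraceL {a b : Type*} [Fintype a] (M : Matrix (a × b) (a × b) ℂ) : Matrix b b ℂ :=
  Matrix.of fun i j => ∑ k : a, M (k, i) (k, j)

def ptraceR {a b : Type*} [Fintype b] (M : Matrix (a × b) (a × b) ℂ) : Matrix a a ℂ :=
  Matrix.of fun i j => ∑ k : b, M (i, k) (j, k)

def ptrace3M {a b c : Type*} [Fintype b] (M : Matrix (a × b × c) (a × b × c) ℂ) :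
    Matrix (a × c) (a × c) ℂ :=
  Matrix.of fun i j => ∑ k : b, M (i.1, k, i.2) (j.1, k, j.2)

open scoped Classical in
noncomputable def msqrt {n : Type*} [Fintype n] [DecidableEq n] (A : Matrix n n ℂ) :
    Matrix n n ℂ :=
  if h : A.PosSemidef then h.sqrt else 0

noncomputable def fidelity {n : Type*} [Fintype n] [DecidableEq n] (ρ σ : Matrix n n ℂ) : ℝ :=
  (((msqrt (msqrt σ * ρ * msqrt σ)).trace).re) ^ 2

def outer {n : Type*} (v : n → ℂ) : Matrix n n ℂ :=
  Matrix.of fun i j => v i * (starRingEnd ℂ) (v j)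

def krausApply {ι a b : Type*} [Fintype ι] [Fintype a]
    (K : ι → Matrix b a ℂ) (ρ : Matrix a a ℂ) : Matrix b b ℂ :=
  ∑ i, K i * ρ * (K i)ᴴ

noncomputable def cdist {i k a b : Type*} [Fintype i] [Fintype k] [Fintype a] [DecidableEq a]
    [Fintype b] [DecidableEq b]
    (K : i -> Matrix b a Complex) (L : k -> Matrix b a Complex) (w : Matrix a a Complex) : Real :=
  sSup {r | exists (m : Nat) (x : Matrix (Fin m × a) (Fin m × a) Complex),
    x.PosSemidef ∧ x.trace = 1 ∧ ptraceL x = w ∧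
    r = traceNorm (krausApply (fun j => (1 : Matrix (Fin m) (Fin m) Complex) ⊗ₖ K j) x
          - krausApply (fun j => (1 : Matrix (Fin m) (Fin m) Complex) ⊗ₖ L j) x)}

namespace CdistAux

variable {n : Type*} [Fintype n] [DecidableEq n]

/-- contraction-like property -/
def Con (C : Matrix n n ℂ) : Prop :=
  ∀ w : n → ℂ, |(dotProduct (star w) (C.mulVec w)).re| ≤ (dotProduct (star w) w).re

lemma dot_mul_mul (U C : Matrix n n ℂ) (w : n → ℂ) :
    dotProduct (star w) ((U * C * Uᴴ).mulVec w)
      = dotProduct (star (Uᴴ.mulVec w)) (C.mulVec (Uᴴ.mulVec w)) := by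
  rw [← Matrix.mulVec_mulVec, ← Matrix.mulVec_mulVec, Matrix.dotProduct_mulVec (star w),
    Matrix.star_mulVec, Matrix.conjTranspose_conjTranspose, ← Matrix.dotProduct_mulVec]

lemma diag_entry_eq (U C : Matrix n n ℂ) (i : n) :
    (Uᴴ * C * U) i i
      = dotProduct (star (fun j => U j i)) (C.mulVec (fun j => U j i)) := by
  simp only [Matrix.mul_apply, Matrix.conjTranspose_apply, dotProduct, Matrix.mulVec,
    Finset.sum_mul, dotProduct]
  rw [Finset.sum_comm]
  refine Finset.sum_congr rfl fun j _ => ?_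
  rw [Finset.mul_sum]
  refine Finset.sum_congr rfl fun k _ => ?_
  simp only [Pi.star_apply]
  ring

/-- pairing inequality -/
lemma pairing {X C : Matrix n n ℂ} (hX : X.IsHermitian) (hC : Con C) :
    |((C * X).trace).re| ≤ ∑ i, |hX.eigenvalues i| := by
  classical
  obtain ⟨ev, hev⟩ : ∃ ev, hX.eigenvalues = ev := ⟨_, rfl⟩
  rw [hev]
  set U : Matrix n n ℂ := (hX.eigenvectorUnitary : Matrix n n ℂ) with hU
  have hspec : X = U * Matrix.diagonal (fun i => (ev i : ℂ)) * Uᴴ := by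
    rw [← hev]
    exact hX.spectral_theorem
  have hUU : Uᴴ * U = 1 := Matrix.mem_unitaryGroup_iff'.mp hX.eigenvectorUnitary.2
  have htr : (C * X).trace = ∑ i, (Uᴴ * C * U) i i * (ev i : ℂ) := by
    rw [hspec]
    have h2 : C * (U * Matrix.diagonal (fun i => (ev i : ℂ)) * Uᴴ)
        = (C * U) * Matrix.diagonal (fun i => (ev i : ℂ)) * Uᴴ := by rw [← Matrix.mul_assoc, ← Matrix.mul_assoc]
    rw [h2, Matrix.trace_mul_cycle, ← Matrix.mul_assoc]
    rw [Matrix.trace]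
    refine Finset.sum_congr rfl fun i _ => ?_
    rw [Matrix.diag_apply, Matrix.mul_diagonal]
  have hunit : ∀ i, (dotProduct (star (fun j => U j i)) (fun j => U j i)).re = 1 := by
    intro i
    have h1 : (Uᴴ * U) i i = 1 := by rw [hUU]; simp [Matrix.one_apply]
    rw [Matrix.mul_apply] at h1
    have h2 : (dotProduct (star (fun j => U j i)) (fun j => U j i)) = 1 := by
      rw [← h1]
      simp [dotProduct, Matrix.conjTranspose_apply, mul_comm]
    rw [h2]; simp
  rw [htr]
  have hre : (∑ i, (Uᴴ * C * U) i i * (ev i : ℂ)).re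
      = ∑ i, ((Uᴴ * C * U) i i).re * ev i := by
    rw [Complex.re_sum]
    refine Finset.sum_congr rfl fun i _ => ?_
    simp [Complex.mul_re]
  rw [hre]
  calc |∑ i, ((Uᴴ * C * U) i i).re * ev i|
      ≤ ∑ i, |((Uᴴ * C * U) i i).re * ev i| := Finset.abs_sum_le_sum_abs _ _
    _ ≤ ∑ i, |ev i| := by
        refine Finset.sum_le_sum fun i _ => ?_
        rw [abs_mul]
        have h1 : |((Uᴴ * C * U) i i).re| ≤ 1 := by
          rw [diag_entry_eq]
          calc |(dotProduct (star (fun j => U j i)) (C.mulVec (fun j => U j i))).re|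
              ≤ (dotProduct (star (fun j => U j i)) (fun j => U j i)).re := hC _
            _ = 1 := hunit i
        nlinarith [abs_nonneg (ev i), abs_nonneg ((Uᴴ * C * U) i i).re]

lemma conj_mul_conj (U A B : Matrix n n ℂ) (hUU : Uᴴ * U = 1) :
    (U * A * Uᴴ) * (U * B * Uᴴ) = U * (A * B) * Uᴴ := by
  have h : A * Uᴴ * (U * B) = A * B := by
    rw [Matrix.mul_assoc A, ← Matrix.mul_assoc Uᴴ, hUU, Matrix.one_mul]
  calc (U * A * Uᴴ) * (U * B * Uᴴ) = U * (A * Uᴴ * (U * B)) * Uᴴ := by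
        simp only [Matrix.mul_assoc]
    _ = U * (A * B) * Uᴴ := by rw [h]

lemma trace_conj (U A : Matrix n n ℂ) (hUU : Uᴴ * U = 1) :
    (U * A * Uᴴ).trace = A.trace := by
  rw [Matrix.trace_mul_cycle, hUU, Matrix.one_mul]

lemma sign_exists {X : Matrix n n ℂ} (hX : X.IsHermitian) :
    ∃ C : Matrix n n ℂ, Con C ∧ ((C * X).trace).re = ∑ i, |hX.eigenvalues i| := by
  classical
  obtain ⟨ev, hev⟩ : ∃ ev, hX.eigenvalues = ev := ⟨_, rfl⟩
  rw [hev]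
  set U : Matrix n n ℂ := (hX.eigenvectorUnitary : Matrix n n ℂ) with hU
  have hspec : X = U * Matrix.diagonal (fun i => (ev i : ℂ)) * Uᴴ := by
    rw [← hev]; exact hX.spectral_theorem
  have hUU : Uᴴ * U = 1 := Matrix.mem_unitaryGroup_iff'.mp hX.eigenvectorUnitary.2
  have hUU' : U * Uᴴ = 1 := Matrix.mem_unitaryGroup_iff.mp hX.eigenvectorUnitary.2
  set s : n → ℂ := fun i => if 0 ≤ ev i then 1 else -1 with hs
  refine ⟨U * Matrix.diagonal s * Uᴴ, ?_, ?_⟩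
  · intro w
    rw [dot_mul_mul]
    set z := Uᴴ.mulVec w with hz
    have hzz : dotProduct (star z) z = dotProduct (star w) w := by
      have h1 := dot_mul_mul U 1 w
      simp only [Matrix.mul_one, hUU', Matrix.one_mulVec] at h1
      exact h1.symm
    have hdz : ∀ i, (star z i * ((Matrix.diagonal s).mulVec z) i).re
        = (if 0 ≤ ev i then 1 else -1) * Complex.normSq (z i) := by
      intro i
      rw [Matrix.mulVec_diagonal]
      by_cases h : 0 ≤ ev i <;>
        simp [hs, h, Pi.star_apply, Complex.normSq_apply, Complex.mul_re,
          Complex.conj_re, Complex.conj_im]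
    have hdot : (dotProduct (star z) ((Matrix.diagonal s).mulVec z)).re
        = ∑ i, (if 0 ≤ ev i then (1:ℝ) else -1) * Complex.normSq (z i) := by
      rw [dotProduct, Complex.re_sum]
      exact Finset.sum_congr rfl fun i _ => hdz i
    rw [hdot]
    have hzz' : (dotProduct (star w) w).re = ∑ i, Complex.normSq (z i) := by
      rw [← hzz, dotProduct, Complex.re_sum]
      refine Finset.sum_congr rfl fun i _ => ?_
      simp [Pi.star_apply, Complex.normSq_apply, Complex.mul_re, Complex.conj_re,
        Complex.conj_im]
    rw [hzz']
    calc |∑ i, (if 0 ≤ ev i then (1:ℝ) else -1) * Complex.normSq (z i)|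
        ≤ ∑ i, |(if 0 ≤ ev i then (1:ℝ) else -1) * Complex.normSq (z i)| :=
          Finset.abs_sum_le_sum_abs _ _
      _ ≤ ∑ i, Complex.normSq (z i) := by
          refine Finset.sum_le_sum fun i _ => ?_
          rw [abs_mul]
          have h2 : |(if 0 ≤ ev i then (1:ℝ) else -1)| = 1 := by split_ifs <;> simp
          rw [h2, one_mul, abs_of_nonneg (Complex.normSq_nonneg _)]
  · have hCX : U * Matrix.diagonal s * Uᴴ * X
        = U * Matrix.diagonal (fun i => s i * (ev i : ℂ)) * Uᴴ := by
      rw [hspec, conj_mul_conj U _ _ hUU, Matrix.diagonal_mul_diagonal]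
    rw [hCX, trace_conj U _ hUU, Matrix.trace_diagonal, Complex.re_sum]
    refine Finset.sum_congr rfl fun i _ => ?_
    by_cases h : 0 ≤ ev i
    · simp [hs, h, abs_of_nonneg h]
    · push_neg at h
      simp [hs, not_le.mpr h, abs_of_neg h]

lemma tn_eq {X : Matrix n n ℂ} (hX : X.IsHermitian) :
    traceNorm X = ∑ i, |hX.eigenvalues i| := by
  classical
  obtain ⟨ev, hev⟩ : ∃ ev, hX.eigenvalues = ev := ⟨_, rfl⟩
  rw [hev]
  set U : Matrix n n ℂ := (hX.eigenvectorUnitary : Matrix n n ℂ) with hU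
  have hspec : X = U * Matrix.diagonal (fun i => (ev i : ℂ)) * Uᴴ := by
    rw [← hev]; exact hX.spectral_theorem
  have hUU : Uᴴ * U = 1 := Matrix.mem_unitaryGroup_iff'.mp hX.eigenvectorUnitary.2
  set Q : Matrix n n ℂ := U * Matrix.diagonal (fun i => Complex.ofReal |ev i|) * Uᴴ with hQ
  have hQpsd : Q.PosSemidef := by
    refine (Matrix.posSemidef_diagonal_iff.mpr fun i => ?_).mul_mul_conjTranspose_same U
    rw [Complex.zero_le_real]
    exact abs_nonneg _
  have hQsq : Q ^ 2 = Xᴴ * X := by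
    rw [pow_two, hQ, conj_mul_conj U _ _ hUU, Matrix.diagonal_mul_diagonal]
    rw [hX.eq]
    conv_rhs => rw [hspec]
    rw [conj_mul_conj U _ _ hUU, Matrix.diagonal_mul_diagonal]
    have hfun : (fun i => Complex.ofReal |ev i| * Complex.ofReal |ev i|)
        = fun i => (ev i : ℂ) * (ev i : ℂ) := by
      funext i
      rw [← Complex.ofReal_mul, ← Complex.ofReal_mul, abs_mul_abs_self]
    rw [hfun]
  have hsqrt : Q = (Matrix.posSemidef_conjTranspose_mul_self X).sqrt :=
    hQpsd.eq_sqrt_of_sq_eq (Matrix.posSemidef_conjTranspose_mul_self X) hQsq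
  rw [traceNorm, ← hsqrt, hQ, trace_conj U _ hUU, Matrix.trace_diagonal, Complex.re_sum]
  simp

lemma trace_re_eq_sum_ev {X : Matrix n n ℂ} (hX : X.IsHermitian) :
    X.trace.re = ∑ i, hX.eigenvalues i := by
  classical
  obtain ⟨ev, hev⟩ : ∃ ev, hX.eigenvalues = ev := ⟨_, rfl⟩
  rw [hev]
  set U : Matrix n n ℂ := (hX.eigenvectorUnitary : Matrix n n ℂ) with hU
  have hspec : X = U * Matrix.diagonal (fun i => (ev i : ℂ)) * Uᴴ := by
    rw [← hev]; exact hX.spectral_theorem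
  have hUU : Uᴴ * U = 1 := Matrix.mem_unitaryGroup_iff'.mp hX.eigenvectorUnitary.2
  rw [hspec, trace_conj U _ hUU, Matrix.trace_diagonal, Complex.re_sum]
  simp

lemma traceNorm_nonneg {X : Matrix n n ℂ} (hX : X.IsHermitian) : 0 ≤ traceNorm X := by
  rw [tn_eq hX]
  exact Finset.sum_nonneg fun i _ => abs_nonneg _

lemma traceNorm_triangle {X Y : Matrix n n ℂ} (hX : X.IsHermitian) (hY : Y.IsHermitian) :
    traceNorm (X + Y) ≤ traceNorm X + traceNorm Y := by
  obtain ⟨C, hC, hCeq⟩ := sign_exists (hX.add hY)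
  rw [tn_eq (hX.add hY), ← hCeq, Matrix.mul_add, Matrix.trace_add, Complex.add_re]
  calc (C * X).trace.re + (C * Y).trace.re
      ≤ |(C * X).trace.re| + |(C * Y).trace.re| := by
        gcongr <;> exact le_abs_self _
    _ ≤ traceNorm X + traceNorm Y := by
        rw [tn_eq hX, tn_eq hY]
        exact add_le_add (pairing hX hC) (pairing hY hC)

lemma traceNorm_psd {X : Matrix n n ℂ} (hX : X.PosSemidef) : traceNorm X = X.trace.re := by
  rw [tn_eq hX.1, trace_re_eq_sum_ev hX.1]
  exact Finset.sum_congr rfl fun i _ => abs_of_nonneg (hX.eigenvalues_nonneg i)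

lemma traceNorm_sub_le {P Q : Matrix n n ℂ} (hP : P.PosSemidef) (hQ : Q.PosSemidef) :
    traceNorm (P - Q) ≤ P.trace.re + Q.trace.re := by
  obtain ⟨C, hC, hCeq⟩ := sign_exists (hP.1.sub hQ.1)
  rw [tn_eq (hP.1.sub hQ.1), ← hCeq, Matrix.mul_sub, Matrix.trace_sub, Complex.sub_re]
  calc (C * P).trace.re - (C * Q).trace.re
      ≤ |(C * P).trace.re| + |(C * Q).trace.re| := by
        have := abs_nonneg ((C * Q).trace.re)
        have := le_abs_self ((C * P).trace.re)
        have := neg_abs_le ((C * Q).trace.re)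
        linarith
    _ ≤ P.trace.re + Q.trace.re := by
        rw [← traceNorm_psd hP, ← traceNorm_psd hQ, tn_eq hP.1, tn_eq hQ.1]
        exact add_le_add (pairing hP.1 hC) (pairing hQ.1 hC)

lemma dot_conj {a b : Type*} [Fintype a] [Fintype b] (A : Matrix b a ℂ) (C : Matrix b b ℂ)
    (w : a → ℂ) :
    dotProduct (star w) ((Aᴴ * C * A).mulVec w)
      = dotProduct (star (A.mulVec w)) (C.mulVec (A.mulVec w)) := by
  rw [← Matrix.mulVec_mulVec, ← Matrix.mulVec_mulVec, Matrix.dotProduct_mulVec (star w),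
    Matrix.star_mulVec, ← Matrix.dotProduct_mulVec]

lemma sum_mulVec {ι a b : Type*} [Fintype ι] [Fintype a] (M : ι → Matrix b a ℂ) (w : a → ℂ) :
    (∑ i, M i).mulVec w = ∑ i, (M i).mulVec w := by
  ext j
  simp only [Matrix.mulVec, dotProduct, Finset.sum_apply, Matrix.sum_apply,
    Finset.sum_mul]
  rw [Finset.sum_comm]

lemma dot_sum {ι m : Type*} [Fintype ι] [Fintype m] (v : m → ℂ) (f : ι → m → ℂ) :
    dotProduct v (∑ i, f i) = ∑ i, dotProduct v (f i) := by
  simp only [dotProduct, Finset.sum_apply, Finset.mul_sum]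
  rw [Finset.sum_comm]

lemma con_adjoint {ι a b : Type*} [Fintype ι] [Fintype a] [DecidableEq a] [Fintype b] [DecidableEq b]
    (K : ι → Matrix b a ℂ) (hK : ∑ i, (K i)ᴴ * K i = 1) {C : Matrix b b ℂ} (hC : Con C) :
    Con (∑ i, (K i)ᴴ * C * K i) := by
  intro w
  rw [sum_mulVec, dot_sum, Complex.re_sum]
  have hbound : ∀ i, |(dotProduct (star w) (((K i)ᴴ * C * K i).mulVec w)).re|
      ≤ (dotProduct (star w) (((K i)ᴴ * K i).mulVec w)).re := by
    intro i
    rw [dot_conj]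
    have h2 := dot_conj (K i) 1 w
    rw [Matrix.mul_one, Matrix.one_mulVec] at h2
    rw [h2]
    exact hC _
  calc |∑ i, (dotProduct (star w) (((K i)ᴴ * C * K i).mulVec w)).re|
      ≤ ∑ i, |(dotProduct (star w) (((K i)ᴴ * C * K i).mulVec w)).re| :=
        Finset.abs_sum_le_sum_abs _ _
    _ ≤ ∑ i, (dotProduct (star w) (((K i)ᴴ * K i).mulVec w)).re :=
        Finset.sum_le_sum fun i _ => hbound i
    _ = (dotProduct (star w) w).re := by
        rw [← Complex.re_sum, ← dot_sum, ← sum_mulVec, hK,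
          Matrix.one_mulVec]

lemma trace_submatrix_equiv {m : Type*} [Fintype m] (e : m ≃ n) (X : Matrix n n ℂ) :
    (X.submatrix e e).trace = X.trace := by
  rw [Matrix.trace, Matrix.trace]
  exact Equiv.sum_comp e fun j => X.diag j

lemma traceNorm_submatrix {m : Type*} [Fintype m] [DecidableEq m] (e : m ≃ n)
    (X : Matrix n n ℂ) : traceNorm (X.submatrix e e) = traceNorm X := by
  set S := (Matrix.posSemidef_conjTranspose_mul_self X).sqrt with hS
  have hSpsd : S.PosSemidef := (Matrix.posSemidef_conjTranspose_mul_self X).posSemidef_sqrt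
  have h1 : (S.submatrix e e) ^ 2 = (X.submatrix e e)ᴴ * (X.submatrix e e) := by
    rw [pow_two, Matrix.submatrix_mul_equiv,
      (Matrix.posSemidef_conjTranspose_mul_self X).sqrt_mul_self,
      Matrix.conjTranspose_submatrix, Matrix.submatrix_mul_equiv]
  have hseq : S.submatrix e e
      = (Matrix.posSemidef_conjTranspose_mul_self (X.submatrix ⇑e ⇑e)).sqrt :=
    (hSpsd.submatrix e).eq_sqrt_of_sq_eq _ h1
  rw [traceNorm, ← hseq, trace_submatrix_equiv e S, traceNorm]

end CdistAux

namespace CdistAux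

variable {ι κ a b c : Type*} [Fintype ι] [Fintype κ] [Fintype a] [Fintype b] [Fintype c]

lemma krausApply_isHermitian (K : ι → Matrix b a ℂ) {x : Matrix a a ℂ} (hx : x.IsHermitian) :
    (krausApply K x).IsHermitian := by
  unfold krausApply
  rw [Matrix.IsHermitian, Matrix.conjTranspose_sum]
  refine Finset.sum_congr rfl fun i _ => ?_
  simp only [Matrix.conjTranspose_mul, Matrix.conjTranspose_conjTranspose, hx.eq,
    Matrix.mul_assoc]

lemma krausApply_posSemidef (K : ι → Matrix b a ℂ) {x : Matrix a a ℂ} (hx : x.PosSemidef) :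
    (krausApply K x).PosSemidef := by
  unfold krausApply
  refine Finset.sum_induction _ _ (fun A B hA hB => hA.add hB) Matrix.PosSemidef.zero
    fun i _ => hx.mul_mul_conjTranspose_same (K i)

lemma krausApply_trace [DecidableEq a] (K : ι → Matrix b a ℂ)
    (hK : ∑ i, (K i)ᴴ * K i = 1) (x : Matrix a a ℂ) : (krausApply K x).trace = x.trace := by
  unfold krausApply
  rw [Matrix.trace_sum]
  have h1 : ∀ i, (K i * x * (K i)ᴴ).trace = ((K i)ᴴ * K i * x).trace := by
    intro i
    rw [Matrix.trace_mul_cycle]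
  calc ∑ i, (K i * x * (K i)ᴴ).trace = ∑ i, ((K i)ᴴ * K i * x).trace :=
        Finset.sum_congr rfl fun i _ => h1 i
    _ = ((∑ i, (K i)ᴴ * K i) * x).trace := by rw [Finset.sum_mul, Matrix.trace_sum]
    _ = x.trace := by rw [hK, Matrix.one_mul]

lemma krausApply_sub (K : ι → Matrix b a ℂ) (x y : Matrix a a ℂ) :
    krausApply K (x - y) = krausApply K x - krausApply K y := by
  unfold krausApply
  rw [← Finset.sum_sub_distrib]
  refine Finset.sum_congr rfl fun i _ => ?_
  rw [Matrix.mul_sub, Matrix.sub_mul]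

lemma krausApply_comp (C : κ → Matrix c b ℂ) (D : ι → Matrix b a ℂ) (x : Matrix a a ℂ) :
    krausApply (fun p : κ × ι => C p.1 * D p.2) x = krausApply C (krausApply D x) := by
  unfold krausApply
  rw [Fintype.sum_prod_type]
  refine Finset.sum_congr rfl fun j _ => ?_
  rw [Matrix.mul_sum, Matrix.sum_mul]
  refine Finset.sum_congr rfl fun i _ => ?_
  simp only [Matrix.conjTranspose_mul, Matrix.mul_assoc]

lemma krausApply_submatrix {a' b' : Type*} [Fintype a'] [Fintype b']
    (K : ι → Matrix b a ℂ) (x : Matrix a a ℂ) (eb : b' ≃ b) (ea : a' ≃ a) :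
    (krausApply K x).submatrix eb eb
      = krausApply (fun i => (K i).submatrix eb ea) (x.submatrix ea ea) := by
  unfold krausApply
  have hsum : (∑ i, K i * x * (K i)ᴴ).submatrix ⇑eb ⇑eb
      = ∑ i, (K i * x * (K i)ᴴ).submatrix ⇑eb ⇑eb := by
    ext p q
    simp [Matrix.submatrix_apply, Matrix.sum_apply]
  rw [hsum]
  refine Finset.sum_congr rfl fun i _ => ?_
  rw [Matrix.conjTranspose_submatrix, ← Matrix.submatrix_mul_equiv (K i * x) _ _ ea,
    ← Matrix.submatrix_mul_equiv (K i) x _ ea _]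

lemma traceNorm_krausApply_le [DecidableEq a] [DecidableEq b] (K : ι → Matrix b a ℂ)
    (hK : ∑ i, (K i)ᴴ * K i = 1) {x : Matrix a a ℂ} (hx : x.IsHermitian) :
    traceNorm (krausApply K x) ≤ traceNorm x := by
  obtain ⟨C, hC, hCeq⟩ := sign_exists (krausApply_isHermitian K hx)
  rw [tn_eq (krausApply_isHermitian K hx), ← hCeq]
  have hmove : (C * krausApply K x).trace = ((∑ i, (K i)ᴴ * C * K i) * x).trace := by
    unfold krausApply
    rw [Finset.mul_sum, Matrix.trace_sum, Finset.sum_mul, Matrix.trace_sum]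
    refine Finset.sum_congr rfl fun i _ => ?_
    calc (C * (K i * x * (K i)ᴴ)).trace = ((C * K i) * x * (K i)ᴴ).trace := by
          simp only [Matrix.mul_assoc]
      _ = ((K i)ᴴ * (C * K i) * x).trace := by rw [Matrix.trace_mul_cycle]
      _ = ((K i)ᴴ * C * K i * x).trace := by simp only [Matrix.mul_assoc]
  rw [hmove]
  calc ((∑ i, (K i)ᴴ * C * K i) * x).trace.re
      ≤ |((∑ i, (K i)ᴴ * C * K i) * x).trace.re| := le_abs_self _
    _ ≤ ∑ i, |hx.eigenvalues i| := pairing hx (con_adjoint K hK hC)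
    _ = traceNorm x := (tn_eq hx).symm

lemma kron_conjTranspose {l m n p : Type*} (A : Matrix l m ℂ) (B : Matrix n p ℂ) :
    (A ⊗ₖ B)ᴴ = Aᴴ ⊗ₖ Bᴴ := by
  ext ⟨i, k⟩ ⟨j, l'⟩
  simp [Matrix.conjTranspose_apply, Matrix.kroneckerMap_apply, star_mul']

lemma kron_sum_right {ι l m n p : Type*} [Fintype ι] (A : Matrix l m ℂ) (B : ι → Matrix n p ℂ) :
    A ⊗ₖ (∑ i, B i) = ∑ i, A ⊗ₖ B i := by
  ext ⟨i, k⟩ ⟨j, l'⟩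
  simp [Matrix.kroneckerMap_apply, Matrix.sum_apply, Finset.mul_sum]

def eqvMid (m : ℕ) (a' c : Type*) : (Fin m × a') × c ≃ Fin m × (c × a') where
  toFun p := (p.1.1, (p.2, p.1.2))
  invFun q := ((q.1, q.2.2), q.2.1)
  left_inv _ := rfl
  right_inv _ := rfl

lemma kron_submatrix_mid (m : ℕ) {a' c d : Type*} [Fintype a'] [DecidableEq a']
    [DecidableEq c] (W : Matrix c d ℂ) :
    ((1 : Matrix (Fin m) (Fin m) ℂ) ⊗ₖ (W ⊗ₖ (1 : Matrix a' a' ℂ))).submatrix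
        (eqvMid m a' c) (eqvMid m a' d)
      = (1 : Matrix (Fin m × a') (Fin m × a') ℂ) ⊗ₖ W := by
  ext ⟨⟨r, s⟩, i⟩ ⟨⟨r', s'⟩, i'⟩
  simp only [Matrix.submatrix_apply, Matrix.kroneckerMap_apply, eqvMid, Equiv.coe_fn_mk,
    Matrix.one_apply, Prod.mk.injEq]
  by_cases h1 : r = r' <;> by_cases h2 : s = s' <;> simp [h1, h2]

lemma kron_submatrix_assoc3 (m : ℕ) {g c d : Type*} [Fintype g] [DecidableEq g]
    (W : Matrix c d ℂ) :
    ((1 : Matrix (Fin m) (Fin m) ℂ) ⊗ₖ (W ⊗ₖ (1 : Matrix g g ℂ))).submatrix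
        (Equiv.prodAssoc (Fin m) c g) (Equiv.prodAssoc (Fin m) d g)
      = ((1 : Matrix (Fin m) (Fin m) ℂ) ⊗ₖ W) ⊗ₖ (1 : Matrix g g ℂ) := by
  ext ⟨⟨r, i⟩, s⟩ ⟨⟨r', i'⟩, s'⟩
  simp only [Matrix.submatrix_apply, Matrix.kroneckerMap_apply, Equiv.prodAssoc_apply,
    Matrix.one_apply]
  ring

lemma kron_submatrix_assoc4 (m : ℕ) {b c d : Type*} [Fintype b] [DecidableEq b]
    (W : Matrix c d ℂ) :
    ((1 : Matrix (Fin m) (Fin m) ℂ) ⊗ₖ ((1 : Matrix b b ℂ) ⊗ₖ W)).submatrix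
        (Equiv.prodAssoc (Fin m) b c) (Equiv.prodAssoc (Fin m) b d)
      = (1 : Matrix (Fin m × b) (Fin m × b) ℂ) ⊗ₖ W := by
  ext ⟨⟨r, i⟩, s⟩ ⟨⟨r', i'⟩, s'⟩
  simp only [Matrix.submatrix_apply, Matrix.kroneckerMap_apply, Equiv.prodAssoc_apply,
    Matrix.one_apply, Prod.mk.injEq]
  by_cases h1 : r = r' <;> by_cases h2 : i = i' <;> simp [h1, h2]

lemma kron_one_left_reindex {R R' : Type*} [DecidableEq R] [DecidableEq R']
    (e : R' ≃ R) {c d : Type*} (W : Matrix c d ℂ) :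
    ((1 : Matrix R R ℂ) ⊗ₖ W).submatrix (Equiv.prodCongr e (Equiv.refl c))
        (Equiv.prodCongr e (Equiv.refl d))
      = (1 : Matrix R' R' ℂ) ⊗ₖ W := by
  ext ⟨p, i⟩ ⟨q, j⟩
  simp [Matrix.submatrix_apply, Matrix.kroneckerMap_apply, Matrix.one_apply,
    e.injective.eq_iff]

lemma ptraceL_reindex_left {R R' g : Type*} [Fintype R] [Fintype R'] (e : R' ≃ R)
    (z : Matrix (R × g) (R × g) ℂ) :
    ptraceL (z.submatrix (Equiv.prodCongr e (Equiv.refl g)) (Equiv.prodCongr e (Equiv.refl g)))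
      = ptraceL z := by
  ext i j
  simp only [ptraceL, Matrix.of_apply, Matrix.submatrix_apply, Equiv.prodCongr_apply,
    Equiv.coe_refl, Prod.map_apply, id_eq]
  exact Equiv.sum_comp e fun k => z (k, i) (k, j)

lemma ptraceL_krausApply_kron {ι c d g : Type*} [Fintype ι] [Fintype c] [DecidableEq c]
    [Fintype d] [Fintype g] [DecidableEq g] (D : ι → Matrix d c ℂ)
    (hD : ∑ i, (D i)ᴴ * D i = 1) (z : Matrix (c × g) (c × g) ℂ) :
    ptraceL (krausApply (fun i => D i ⊗ₖ (1 : Matrix g g ℂ)) z) = ptraceL z := by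
  ext s t
  simp only [ptraceL, Matrix.of_apply, krausApply, Matrix.sum_apply]
  have hrow : ∀ (i : ι) (k : d) (q : c × g),
      ((D i ⊗ₖ (1 : Matrix g g ℂ)) * z) (k, s) q = ∑ p : c, D i k p * z (p, s) q := by
    intro i k q
    rw [Matrix.mul_apply, Fintype.sum_prod_type]
    refine Finset.sum_congr rfl fun p _ => ?_
    rw [Finset.sum_eq_single s]
    · simp
    · intro p₂ _ hne
      simp [Matrix.one_apply, Ne.symm hne]
    · simp
  have hentry : ∀ (i : ι) (k : d),
      ((D i ⊗ₖ (1 : Matrix g g ℂ)) * z * ((D i ⊗ₖ (1 : Matrix g g ℂ)))ᴴ) (k, s) (k, t)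
        = ∑ q : c, ∑ p : c, z (p, s) (q, t) * (star (D i k q) * D i k p) := by
    intro i k
    rw [Matrix.mul_apply, Fintype.sum_prod_type]
    have h2 : ∀ q : c, ∑ q₂ : g,
        ((D i ⊗ₖ (1 : Matrix g g ℂ)) * z) (k, s) (q, q₂)
          * ((D i ⊗ₖ (1 : Matrix g g ℂ))ᴴ) (q, q₂) (k, t)
        = ∑ p : c, z (p, s) (q, t) * (star (D i k q) * D i k p) := by
      intro q
      rw [Finset.sum_eq_single t]
      · rw [hrow, Finset.sum_mul]
        refine Finset.sum_congr rfl fun p _ => ?_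
        simp only [Matrix.conjTranspose_apply, Matrix.kroneckerMap_apply, Matrix.one_apply_eq,
          mul_one, star_mul']
        ring
      · intro q₂ _ hne
        simp [Matrix.conjTranspose_apply, Matrix.one_apply, Ne.symm hne]
      · simp
    exact Finset.sum_congr rfl fun q _ => h2 q
  have hcol : ∀ p q : c, (∑ i, ∑ k, star (D i k q) * D i k p)
      = if q = p then 1 else 0 := by
    intro p q
    have h3 : (∑ i, (D i)ᴴ * D i) q p = (1 : Matrix c c ℂ) q p := by rw [hD]
    simpa [Matrix.sum_apply, Matrix.mul_apply, Matrix.conjTranspose_apply,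
      Matrix.one_apply] using h3
  calc ∑ k : d, ∑ i : ι,
        ((D i ⊗ₖ (1 : Matrix g g ℂ)) * z * ((D i ⊗ₖ (1 : Matrix g g ℂ)))ᴴ) (k, s) (k, t)
      = ∑ ki : d × ι, ∑ qp : c × c,
          z (qp.2, s) (qp.1, t) * (star (D ki.2 ki.1 qp.1) * D ki.2 ki.1 qp.2) := by
        rw [Fintype.sum_prod_type]
        refine Finset.sum_congr rfl fun k _ => ?_
        refine Finset.sum_congr rfl fun i _ => ?_
        rw [hentry i k, Fintype.sum_prod_type]
    _ = ∑ qp : c × c, ∑ ki : d × ι,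
          z (qp.2, s) (qp.1, t) * (star (D ki.2 ki.1 qp.1) * D ki.2 ki.1 qp.2) :=
        Finset.sum_comm
    _ = ∑ qp : c × c, z (qp.2, s) (qp.1, t) * (if qp.1 = qp.2 then 1 else 0) := by
        refine Finset.sum_congr rfl fun qp _ => ?_
        rw [← Finset.mul_sum]
        congr 1
        rw [← hcol qp.2 qp.1, Fintype.sum_prod_type]
        rw [Finset.sum_comm]
    _ = ∑ p : c, z (p, s) (p, t) := by
        rw [Fintype.sum_prod_type]
        have h4 : ∀ q : c, ∑ p : c, z (p, s) (q, t) * (if q = p then 1 else 0)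
            = if q ∈ (Finset.univ : Finset c) then z (q, s) (q, t) else 0 := by
          intro q
          rw [← Finset.sum_ite_eq (Finset.univ : Finset c) q (fun p => z (p, s) (q, t))]
          refine Finset.sum_congr rfl fun p _ => ?_
          split_ifs <;> simp
        calc ∑ q : c, ∑ p : c, z (p, s) (q, t) * (if q = p then 1 else 0)
            = ∑ q : c, if q ∈ (Finset.univ : Finset c) then z (q, s) (q, t) else 0 :=
              Finset.sum_congr rfl fun q _ => h4 q
          _ = ∑ q : c, z (q, s) (q, t) := by simp

lemma krausApply_comp' {ι κ a b c : Type*} [Fintype ι] [Fintype κ] [Fintype a] [Fintype b]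
    (C : κ → Matrix c b ℂ) (D : ι → Matrix b a ℂ) (x : Matrix a a ℂ) :
    krausApply (fun p : ι × κ => C p.2 * D p.1) x = krausApply C (krausApply D x) := by
  unfold krausApply
  rw [Fintype.sum_prod_type, Finset.sum_comm]
  refine Finset.sum_congr rfl fun j _ => ?_
  rw [Matrix.mul_sum, Matrix.sum_mul]
  refine Finset.sum_congr rfl fun i _ => ?_
  simp only [Matrix.conjTranspose_mul, Matrix.mul_assoc]

lemma kron_sum_left {ι l m n p : Type*} [Fintype ι] (A : Matrix l m ℂ) (B : ι → Matrix n p ℂ) :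
    (∑ i, B i) ⊗ₖ A = ∑ i, B i ⊗ₖ A := by
  ext ⟨i, k⟩ ⟨j, l'⟩
  simp [Matrix.kroneckerMap_apply, Matrix.sum_apply, Finset.sum_mul]

lemma kron_kraus_left {i a b R : Type*} [Fintype i] [Fintype a] [DecidableEq a] [Fintype b]
    [Fintype R] [DecidableEq R] (K : i → Matrix b a ℂ) (hK : ∑ j, (K j)ᴴ * K j = 1) :
    ∑ j, ((1 : Matrix R R ℂ) ⊗ₖ K j)ᴴ * ((1 : Matrix R R ℂ) ⊗ₖ K j) = 1 := by
  have h : ∀ j, ((1 : Matrix R R ℂ) ⊗ₖ K j)ᴴ * ((1 : Matrix R R ℂ) ⊗ₖ K j)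
      = (1 : Matrix R R ℂ) ⊗ₖ ((K j)ᴴ * K j) := by
    intro j
    rw [kron_conjTranspose, Matrix.conjTranspose_one, ← Matrix.mul_kronecker_mul,
      Matrix.one_mul]
  rw [Finset.sum_congr rfl fun j _ => h j, ← kron_sum_right, hK, Matrix.one_kronecker_one]

lemma kron_kraus_right {i a b R : Type*} [Fintype i] [Fintype a] [DecidableEq a] [Fintype b]
    [Fintype R] [DecidableEq R] (K : i → Matrix b a ℂ) (hK : ∑ j, (K j)ᴴ * K j = 1) :
    ∑ j, (K j ⊗ₖ (1 : Matrix R R ℂ))ᴴ * (K j ⊗ₖ (1 : Matrix R R ℂ)) = 1 := by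
  have h : ∀ j, (K j ⊗ₖ (1 : Matrix R R ℂ))ᴴ * (K j ⊗ₖ (1 : Matrix R R ℂ))
      = ((K j)ᴴ * K j) ⊗ₖ (1 : Matrix R R ℂ) := by
    intro j
    rw [kron_conjTranspose, Matrix.conjTranspose_one, ← Matrix.mul_kronecker_mul,
      Matrix.one_mul]
  rw [Finset.sum_congr rfl fun j _ => h j, ← kron_sum_left, hK, Matrix.one_kronecker_one]

end CdistAux

namespace CdistAux

lemma cdist_nonneg {i k a b : Type*} [Fintype i] [Fintype k] [Fintype a] [DecidableEq a]
    [Fintype b] [DecidableEq b] (K : i → Matrix b a ℂ) (L : k → Matrix b a ℂ)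
    (w : Matrix a a ℂ) : 0 ≤ cdist K L w := by
  unfold cdist
  apply Real.sSup_nonneg
  rintro r ⟨m, x, hx, -, -, rfl⟩
  exact traceNorm_nonneg ((krausApply_isHermitian _ hx.1).sub (krausApply_isHermitian _ hx.1))

lemma le_cdist {i k a b : Type*} [Fintype i] [Fintype k] [Fintype a] [DecidableEq a]
    [Fintype b] [DecidableEq b] (K : i → Matrix b a ℂ) (L : k → Matrix b a ℂ)
    (w : Matrix a a ℂ) (hK : ∑ j, (K j)ᴴ * K j = 1) (hL : ∑ j, (L j)ᴴ * L j = 1)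
    (m : ℕ) (x : Matrix (Fin m × a) (Fin m × a) ℂ) (hx : x.PosSemidef) (hx1 : x.trace = 1)
    (hxw : ptraceL x = w) :
    traceNorm (krausApply (fun j => (1 : Matrix (Fin m) (Fin m) ℂ) ⊗ₖ K j) x
      - krausApply (fun j => (1 : Matrix (Fin m) (Fin m) ℂ) ⊗ₖ L j) x) ≤ cdist K L w := by
  unfold cdist
  apply le_csSup
  · refine ⟨2, ?_⟩
    rintro r ⟨m', x', hx', hx1', -, rfl⟩
    have hKc := kron_kraus_left (R := Fin m') K hK
    have hLc := kron_kraus_left (R := Fin m') L hL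
    have h1 := traceNorm_sub_le
      (krausApply_posSemidef (fun j => (1 : Matrix (Fin m') (Fin m') ℂ) ⊗ₖ K j) hx')
      (krausApply_posSemidef (fun j => (1 : Matrix (Fin m') (Fin m') ℂ) ⊗ₖ L j) hx')
    rw [krausApply_trace _ hKc, krausApply_trace _ hLc, hx1'] at h1
    simpa using h1.trans_eq (by norm_num)
  · exact ⟨m, x, hx, hx1, hxw, rfl⟩

end CdistAux

open CdistAux in
theorem cdist_tensor {ι₁ ι₂ κ₁ κ₂ a b a' b' : Type*}
    [Fintype ι₁] [Fintype ι₂] [Fintype κ₁] [Fintype κ₂]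
    [Fintype a] [DecidableEq a] [Fintype b] [DecidableEq b]
    [Fintype a'] [DecidableEq a'] [Fintype b'] [DecidableEq b']
    (M : ι₁ → Matrix b a ℂ) (N : ι₂ → Matrix b a ℂ)
    (K : κ₁ → Matrix b' a' ℂ) (L : κ₂ → Matrix b' a' ℂ)
    (hM : ∑ i, (M i)ᴴ * M i = 1) (hN : ∑ i, (N i)ᴴ * N i = 1)
    (hK : ∑ i, (K i)ᴴ * K i = 1) (hL : ∑ i, (L i)ᴴ * L i = 1)
    (ω : Matrix a a ℂ) (hω : ω.PosSemidef) (hω1 : ω.trace = 1)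
    (ρ : Matrix a' a' ℂ) (hρ : ρ.PosSemidef) (hρ1 : ρ.trace = 1) :
    cdist (fun p : ι₁ × κ₁ => M p.1 ⊗ₖ K p.2) (fun p : ι₂ × κ₂ => N p.1 ⊗ₖ L p.2) (ω ⊗ₖ ρ)
      ≤ cdist M N ω + cdist K L ρ := by
  classical
  have hrhs : 0 ≤ cdist M N ω + cdist K L ρ :=
    add_nonneg (cdist_nonneg M N ω) (cdist_nonneg K L ρ)
  unfold cdist
  refine Real.sSup_le ?_ hrhs
  rintro r ⟨m, x, hx, hx1, hxp, rfl⟩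
  -- entrywise form of the marginal hypothesis
  have hent : ∀ (i j : a) (s t : a'), (∑ u : Fin m, x (u, (i, s)) (u, (j, t))) = ω i j * ρ s t := by
    intro i j s t
    have h := congrFun (congrFun (congrArg (fun (X : Matrix (a × a') (a × a') ℂ) p q => X p q)
      hxp) (i, s)) (j, t)
    simpa [ptraceL, Matrix.kroneckerMap_apply] using h
  -- the four lifted families
  set Mop : ι₁ → Matrix (Fin m × (b × a')) (Fin m × (a × a')) ℂ :=
    (fun i => (1 : Matrix (Fin m) (Fin m) ℂ) ⊗ₖ (M i ⊗ₖ (1 : Matrix a' a' ℂ))) with hMop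
  set Nop : ι₂ → Matrix (Fin m × (b × a')) (Fin m × (a × a')) ℂ :=
    (fun i => (1 : Matrix (Fin m) (Fin m) ℂ) ⊗ₖ (N i ⊗ₖ (1 : Matrix a' a' ℂ))) with hNop
  set CK : κ₁ → Matrix (Fin m × (b × b')) (Fin m × (b × a')) ℂ :=
    (fun j => (1 : Matrix (Fin m) (Fin m) ℂ) ⊗ₖ ((1 : Matrix b b ℂ) ⊗ₖ K j)) with hCK
  set CL : κ₂ → Matrix (Fin m × (b × b')) (Fin m × (b × a')) ℂ :=
    (fun j => (1 : Matrix (Fin m) (Fin m) ℂ) ⊗ₖ ((1 : Matrix b b ℂ) ⊗ₖ L j)) with hCL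
  -- Kraus conditions
  have hMopc : ∑ i, (Mop i)ᴴ * Mop i = 1 :=
    kron_kraus_left (R := Fin m) _ (kron_kraus_right (R := a') M hM)
  have hNopc : ∑ i, (Nop i)ᴴ * Nop i = 1 :=
    kron_kraus_left (R := Fin m) _ (kron_kraus_right (R := a') N hN)
  have hCKc : ∑ j, (CK j)ᴴ * CK j = 1 :=
    kron_kraus_left (R := Fin m) _ (kron_kraus_left (R := b) K hK)
  have hCLc : ∑ j, (CL j)ᴴ * CL j = 1 :=
    kron_kraus_left (R := Fin m) _ (kron_kraus_left (R := b) L hL)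
  -- factorization of the product channels
  have hfacMK : (fun p : ι₁ × κ₁ =>
      (1 : Matrix (Fin m) (Fin m) ℂ) ⊗ₖ (M p.1 ⊗ₖ K p.2)) = fun p => CK p.2 * Mop p.1 := by
    funext p
    rw [hCK, hMop, ← Matrix.mul_kronecker_mul, ← Matrix.mul_kronecker_mul, Matrix.one_mul,
      Matrix.one_mul, Matrix.mul_one]
  have hfacNL : (fun p : ι₂ × κ₂ =>
      (1 : Matrix (Fin m) (Fin m) ℂ) ⊗ₖ (N p.1 ⊗ₖ L p.2)) = fun p => CL p.2 * Nop p.1 := by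
    funext p
    rw [hCL, hNop, ← Matrix.mul_kronecker_mul, ← Matrix.mul_kronecker_mul, Matrix.one_mul,
      Matrix.one_mul, Matrix.mul_one]
  set P : Matrix (Fin m × (b × a')) (Fin m × (b × a')) ℂ := krausApply Mop x with hP
  set Q : Matrix (Fin m × (b × a')) (Fin m × (b × a')) ℂ := krausApply Nop x with hQ
  have hPh : P.IsHermitian := krausApply_isHermitian _ hx.1
  have hQh : Q.IsHermitian := krausApply_isHermitian _ hx.1
  have hcomp1 : krausApply (fun p : ι₁ × κ₁ =>
      (1 : Matrix (Fin m) (Fin m) ℂ) ⊗ₖ (M p.1 ⊗ₖ K p.2)) x = krausApply CK P := by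
    rw [hfacMK, hP]
    exact krausApply_comp' CK Mop x
  have hcomp2 : krausApply (fun p : ι₂ × κ₂ =>
      (1 : Matrix (Fin m) (Fin m) ℂ) ⊗ₖ (N p.1 ⊗ₖ L p.2)) x = krausApply CL Q := by
    rw [hfacNL, hQ]
    exact krausApply_comp' CL Nop x
  rw [hcomp1, hcomp2]
  -- triangle inequality
  have hAh : (krausApply CK P - krausApply CK Q).IsHermitian :=
    (krausApply_isHermitian _ hPh).sub (krausApply_isHermitian _ hQh)
  have hBh : (krausApply CK Q - krausApply CL Q).IsHermitian :=
    (krausApply_isHermitian _ hQh).sub (krausApply_isHermitian _ hQh)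
  have htri : traceNorm (krausApply CK P - krausApply CL Q)
      ≤ traceNorm (krausApply CK P - krausApply CK Q)
        + traceNorm (krausApply CK Q - krausApply CL Q) := by
    have h := traceNorm_triangle hAh hBh
    rwa [sub_add_sub_cancel] at h
  -- ============ Term 1 ============
  have hterm1 : traceNorm (krausApply CK P - krausApply CK Q) ≤ cdist M N ω := by
    have hstep : krausApply CK P - krausApply CK Q = krausApply CK (P - Q) :=
      (krausApply_sub CK P Q).symm
    rw [hstep]
    have hcontr : traceNorm (krausApply CK (P - Q)) ≤ traceNorm (P - Q) :=
      traceNorm_krausApply_le CK hCKc (hPh.sub hQh)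
    refine hcontr.trans ?_
    -- reindex (Fin m × a') × c ≃ Fin m × (c × a') and then Fin-ify the reference
    set m₁ : ℕ := Fintype.card (Fin m × a') with hm₁
    set e₁ : Fin m × a' ≃ Fin m₁ := Fintype.equivFin (Fin m × a') with he₁
    set Fb : Fin m₁ × b ≃ Fin m × (b × a') :=
      (Equiv.prodCongr e₁.symm (Equiv.refl b)).trans (eqvMid m a' b) with hFb
    set Fa : Fin m₁ × a ≃ Fin m × (a × a') :=
      (Equiv.prodCongr e₁.symm (Equiv.refl a)).trans (eqvMid m a' a) with hFa
    set x₁ : Matrix (Fin m₁ × a) (Fin m₁ × a) ℂ := x.submatrix Fa Fa with hx₁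
    have hopM : ∀ i, (Mop i).submatrix Fb Fa = (1 : Matrix (Fin m₁) (Fin m₁) ℂ) ⊗ₖ M i := by
      intro i
      rw [hFb, hFa, Equiv.coe_trans, Equiv.coe_trans, ← Matrix.submatrix_submatrix,
        hMop, kron_submatrix_mid, kron_one_left_reindex]
    have hopN : ∀ i, (Nop i).submatrix Fb Fa = (1 : Matrix (Fin m₁) (Fin m₁) ℂ) ⊗ₖ N i := by
      intro i
      rw [hFb, hFa, Equiv.coe_trans, Equiv.coe_trans, ← Matrix.submatrix_submatrix,
        hNop, kron_submatrix_mid, kron_one_left_reindex]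
    have hsub : (P - Q).submatrix Fb Fb
        = krausApply (fun i => (1 : Matrix (Fin m₁) (Fin m₁) ℂ) ⊗ₖ M i) x₁
          - krausApply (fun i => (1 : Matrix (Fin m₁) (Fin m₁) ℂ) ⊗ₖ N i) x₁ := by
      have hPQ : (P - Q).submatrix (⇑Fb) (⇑Fb)
          = P.submatrix (⇑Fb) (⇑Fb) - Q.submatrix (⇑Fb) (⇑Fb) := by
        ext p q
        simp [Matrix.submatrix_apply, Matrix.sub_apply]
      rw [hPQ, hP, hQ, krausApply_submatrix Mop x Fb Fa, krausApply_submatrix Nop x Fb Fa,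
        ← hx₁]
      simp only [hopM, hopN]
    have hx₁psd : x₁.PosSemidef := hx.submatrix _
    have hx₁tr : x₁.trace = 1 := by rw [hx₁, trace_submatrix_equiv Fa x, hx1]
    have hx₁p : ptraceL x₁ = ω := by
      have hdecomp : x₁ = (x.submatrix (eqvMid m a' a) (eqvMid m a' a)).submatrix
          (Equiv.prodCongr e₁.symm (Equiv.refl a)) (Equiv.prodCongr e₁.symm (Equiv.refl a)) := by
        rw [hx₁, hFa, Matrix.submatrix_submatrix, ← Equiv.coe_trans]
      rw [hdecomp, ptraceL_reindex_left]
      ext i j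
      simp only [ptraceL, Matrix.of_apply, Matrix.submatrix_apply, eqvMid, Equiv.coe_fn_mk]
      rw [Fintype.sum_prod_type, Finset.sum_comm]
      calc ∑ s : a', ∑ u : Fin m, x (u, (i, s)) (u, (j, s))
          = ∑ s : a', ω i j * ρ s s := Finset.sum_congr rfl fun s _ => hent i j s s
        _ = ω i j * ρ.trace := by rw [Matrix.trace, Finset.mul_sum]; rfl
        _ = ω i j := by rw [hρ1, mul_one]
    have hmem := le_cdist M N ω hM hN m₁ x₁ hx₁psd hx₁tr hx₁p
    rw [← hsub] at hmem
    rwa [traceNorm_submatrix Fb (P - Q)] at hmem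
  -- ============ Term 2 ============
  have hterm2 : traceNorm (krausApply CK Q - krausApply CL Q) ≤ cdist K L ρ := by
    set m₂ : ℕ := Fintype.card (Fin m × b) with hm₂
    set e₂ : Fin m × b ≃ Fin m₂ := Fintype.equivFin (Fin m × b) with he₂
    set Gb : Fin m₂ × b' ≃ Fin m × (b × b') :=
      (Equiv.prodCongr e₂.symm (Equiv.refl b')).trans (Equiv.prodAssoc (Fin m) b b') with hGb
    set Ga : Fin m₂ × a' ≃ Fin m × (b × a') :=
      (Equiv.prodCongr e₂.symm (Equiv.refl a')).trans (Equiv.prodAssoc (Fin m) b a') with hGa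
    set y₂ : Matrix (Fin m₂ × a') (Fin m₂ × a') ℂ := Q.submatrix Ga Ga with hy₂
    have hopK : ∀ j, (CK j).submatrix Gb Ga = (1 : Matrix (Fin m₂) (Fin m₂) ℂ) ⊗ₖ K j := by
      intro j
      rw [hGb, hGa, Equiv.coe_trans, Equiv.coe_trans, ← Matrix.submatrix_submatrix,
        hCK, kron_submatrix_assoc4, kron_one_left_reindex]
    have hopL : ∀ j, (CL j).submatrix Gb Ga = (1 : Matrix (Fin m₂) (Fin m₂) ℂ) ⊗ₖ L j := by
      intro j
      rw [hGb, hGa, Equiv.coe_trans, Equiv.coe_trans, ← Matrix.submatrix_submatrix,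
        hCL, kron_submatrix_assoc4, kron_one_left_reindex]
    have hsub2 : (krausApply CK Q - krausApply CL Q).submatrix Gb Gb
        = krausApply (fun j => (1 : Matrix (Fin m₂) (Fin m₂) ℂ) ⊗ₖ K j) y₂
          - krausApply (fun j => (1 : Matrix (Fin m₂) (Fin m₂) ℂ) ⊗ₖ L j) y₂ := by
      have hPQ : (krausApply CK Q - krausApply CL Q).submatrix (⇑Gb) (⇑Gb)
          = (krausApply CK Q).submatrix (⇑Gb) (⇑Gb)
            - (krausApply CL Q).submatrix (⇑Gb) (⇑Gb) := by
        ext p q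
        simp [Matrix.submatrix_apply, Matrix.sub_apply]
      rw [hPQ, krausApply_submatrix CK Q Gb Ga, krausApply_submatrix CL Q Gb Ga, ← hy₂]
      simp only [hopK, hopL]
    have hQpsd : Q.PosSemidef := krausApply_posSemidef _ hx
    have hy₂psd : y₂.PosSemidef := hQpsd.submatrix _
    have hQtr : Q.trace = 1 := by rw [hQ, krausApply_trace _ hNopc, hx1]
    have hy₂tr : y₂.trace = 1 := by rw [hy₂, trace_submatrix_equiv Ga Q, hQtr]
    have hy₂p : ptraceL y₂ = ρ := by
      have hdecomp : y₂ = (Q.submatrix (Equiv.prodAssoc (Fin m) b a')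
          (Equiv.prodAssoc (Fin m) b a')).submatrix
          (Equiv.prodCongr e₂.symm (Equiv.refl a')) (Equiv.prodCongr e₂.symm (Equiv.refl a')) := by
        rw [hy₂, hGa, Matrix.submatrix_submatrix, ← Equiv.coe_trans]
      rw [hdecomp, ptraceL_reindex_left]
      have hQassoc : Q.submatrix (Equiv.prodAssoc (Fin m) b a') (Equiv.prodAssoc (Fin m) b a')
          = krausApply (fun i => ((1 : Matrix (Fin m) (Fin m) ℂ) ⊗ₖ N i) ⊗ₖ
              (1 : Matrix a' a' ℂ))
            (x.submatrix (Equiv.prodAssoc (Fin m) a a') (Equiv.prodAssoc (Fin m) a a')) := by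
        rw [hQ, krausApply_submatrix Nop x (Equiv.prodAssoc (Fin m) b a')
          (Equiv.prodAssoc (Fin m) a a')]
        have hfam : (fun i => (Nop i).submatrix (Equiv.prodAssoc (Fin m) b a')
            (Equiv.prodAssoc (Fin m) a a'))
            = fun i => ((1 : Matrix (Fin m) (Fin m) ℂ) ⊗ₖ N i) ⊗ₖ (1 : Matrix a' a' ℂ) := by
          funext i
          rw [hNop]
          exact kron_submatrix_assoc3 m (N i)
        rw [hfam]
      rw [hQassoc, ptraceL_krausApply_kron _ (kron_kraus_left (R := Fin m) N hN)]
      ext s t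
      simp only [ptraceL, Matrix.of_apply, Matrix.submatrix_apply, Equiv.prodAssoc_apply]
      rw [Fintype.sum_prod_type, Finset.sum_comm]
      calc ∑ i : a, ∑ u : Fin m, x (u, (i, s)) (u, (i, t))
          = ∑ i : a, ω i i * ρ s t := Finset.sum_congr rfl fun i _ => hent i i s t
        _ = ω.trace * ρ s t := by rw [Matrix.trace, Finset.sum_mul]; rfl
        _ = ρ s t := by rw [hω1, one_mul]
    have hmem := le_cdist K L ρ hK hL m₂ y₂ hy₂psd hy₂tr hy₂p
    rw [← hsub2] at hmem
    rwa [traceNorm_submatrix Gb (krausApply CK Q - krausApply CL Q)] at hmem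
  calc traceNorm (krausApply CK P - krausApply CL Q)
      ≤ traceNorm (krausApply CK P - krausApply CK Q)
        + traceNorm (krausApply CK Q - krausApply CL Q) := htri
    _ ≤ cdist M N ω + cdist K L ρ := add_le_add hterm1 hterm2
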